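/- Let n ≥ 2, let A = ℤⁿ (so that A − A + A − A = ℤⁿ), and let 0 < δ < 1/4. Then for every η > 0 and every ω ∈ ℝⁿ, the set W := {τ ∈ ℝⁿ : |e^{i ω·τ} − 1| < η} is not contained in ℤⁿ + B_δ, where B_δ is the closed ball of radius δ centered at 0 and ω·τ denotes the Euclidean inner product. In particular, the Bogolyubov-type statement (S) — that for every relatively dense set A ⊆ ℝⁿ and δ > 0 there exist η > 0 and finitely many ω₁,…,ω_k ∈ ℝⁿ with {τ : |e^{iω_l·τ}−1| < η for all l} ⊆ A − A + A − A + B_δ — fails for A = ℤⁿ when n ≥ 2 with a single frequency (k = 1). -/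

import Mathlib

open Real Filter Topology

lemma coord_le_norm {n : ℕ} (x : EuclideanSpace ℝ (Fin n)) (j : Fin n) :
    |x j| ≤ ‖x‖ := by
  have h := abs_real_inner_le_norm (EuclideanSpace.single j (1 : ℝ)) x
  rw [EuclideanSpace.inner_single_left] at h
  simpa [EuclideanSpace.norm_single] using h

/-- Failure of the Bogolyubov-type statement (S) in dimension `n ≥ 2` for `A = ℤⁿ`:
for every `η > 0` and every single frequency `ω ∈ ℝⁿ`, the set
`W = {τ : |e^{i ω·τ} − 1| < η}` is not contained in `ℤⁿ + B_δ` whenever `0 < δ < 1/4`. -/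
theorem stmt11 (n : ℕ) (hn : 2 ≤ n) (δ : ℝ) (hδ0 : 0 < δ) (hδ : δ < 1 / 4)
    (η : ℝ) (hη : 0 < η) (ω : EuclideanSpace ℝ (Fin n)) :
    ¬ ({τ : EuclideanSpace ℝ (Fin n) |
          ‖Complex.exp (Complex.I * ((inner ℝ ω τ : ℝ) : ℂ)) - 1‖ < η} ⊆
        {x : EuclideanSpace ℝ (Fin n) |
          ∃ m : EuclideanSpace ℝ (Fin n), (∀ j, ∃ z : ℤ, m j = z) ∧ ‖x - m‖ ≤ δ}) := by
  intro hsub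
  set i0 : Fin n := ⟨0, by omega⟩
  set i1 : Fin n := ⟨1, by omega⟩
  have hne : i0 ≠ i1 := by simp [i0, i1, Fin.ext_iff]
  -- construct τ with ⟪ω, τ⟫ = 0 and some coordinate equal to 1/2
  obtain ⟨τ, hip, j, hj⟩ : ∃ τ : EuclideanSpace ℝ (Fin n),
      (inner ℝ ω τ : ℝ) = 0 ∧ ∃ j, τ j = 1 / 2 := by
    by_cases h0 : ω i0 = 0
    · refine ⟨(1/2 : ℝ) • EuclideanSpace.single i0 (1 : ℝ), ?_, i0, ?_⟩
      · rw [real_inner_smul_right, EuclideanSpace.inner_single_right]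
        simp [h0]
      · simp [EuclideanSpace.single_apply]
    · refine ⟨(1 / (2 * ω i0)) • (ω i0 • EuclideanSpace.single i1 (1 : ℝ)
          - ω i1 • EuclideanSpace.single i0 (1 : ℝ)), ?_, i1, ?_⟩
      · rw [real_inner_smul_right, inner_sub_right, real_inner_smul_right,
          real_inner_smul_right, EuclideanSpace.inner_single_right,
          EuclideanSpace.inner_single_right]
        simp only [starRingEnd_apply, star_trivial]
        field_simp
        ring
      · have : ((ω i0 • EuclideanSpace.single i1 (1 : ℝ)
            - ω i1 • EuclideanSpace.single i0 (1 : ℝ)) : EuclideanSpace ℝ (Fin n)) i1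
            = ω i0 := by
          simp [EuclideanSpace.single_apply, hne.symm]
        show (1 / (2 * ω i0)) * (ω i0 • EuclideanSpace.single i1 (1 : ℝ)
            - ω i1 • EuclideanSpace.single i0 (1 : ℝ) : EuclideanSpace ℝ (Fin n)) i1 = 1 / 2
        rw [this]
        field_simp
  have hτW : τ ∈ {τ : EuclideanSpace ℝ (Fin n) |
      ‖Complex.exp (Complex.I * ((inner ℝ ω τ : ℝ) : ℂ)) - 1‖ < η} := by
    simp only [Set.mem_setOf_eq, hip, Complex.ofReal_zero, mul_zero, Complex.exp_zero,
      sub_self, map_zero, norm_zero]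
    exact hη
  obtain ⟨m, hm, hdist⟩ := hsub hτW
  obtain ⟨z, hz⟩ := hm j
  have h1 : |τ j - m j| ≤ ‖τ - m‖ := by
    simpa using coord_le_norm (τ - m) j
  have h2 : (1 : ℝ) / 2 ≤ |τ j - m j| := by
    rw [hj, hz]
    rcases le_or_gt (z : ℝ) 0 with h | h
    · rw [abs_of_pos (by linarith)]; linarith
    · have : (1 : ℝ) ≤ z := by exact_mod_cast h
      rw [abs_of_nonpos (by linarith)]; linarith
  linarith
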